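/- For complex numbers z, w with |z|² + |w|² = 1 and w² + √2 iw + 1 ≠ 0, the map with components f₁ = 2^(1/4)(zw − iz)/(w² + √2 iw + 1), f₂ = (w² − √2 iw + 1)/(w² + √2 iw + 1), f₃ = 2^(1/4)(zw + iz)/(w² + √2 iw + 1) satisfies |f₁|² + |f₂|² − |f₃|² = 1. -/

import Mathlib

theorem stmt_16 (z w : ℂ) (h : ‖z‖ ^ 2 + ‖w‖ ^ 2 = 1)
    (hden : w ^ 2 + (Real.sqrt 2 : ℂ) * Complex.I * w + 1 ≠ 0) :
    ‖(((2 : ℝ) ^ ((1 : ℝ) / 4) : ℝ) : ℂ) * (z * w - Complex.I * z)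
        / (w ^ 2 + (Real.sqrt 2 : ℂ) * Complex.I * w + 1)‖ ^ 2
      + ‖(w ^ 2 - (Real.sqrt 2 : ℂ) * Complex.I * w + 1)
        / (w ^ 2 + (Real.sqrt 2 : ℂ) * Complex.I * w + 1)‖ ^ 2
      - ‖(((2 : ℝ) ^ ((1 : ℝ) / 4) : ℝ) : ℂ) * (z * w + Complex.I * z)
        / (w ^ 2 + (Real.sqrt 2 : ℂ) * Complex.I * w + 1)‖ ^ 2 = 1 := by
  have hd : ‖w ^ 2 + (Real.sqrt 2 : ℂ) * Complex.I * w + 1‖ ≠ 0 :=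
    norm_ne_zero_iff.mpr hden
  have hq : ((2:ℝ) ^ ((1:ℝ)/4)) ^ 2 = Real.sqrt 2 := by
    rw [← Real.rpow_natCast ((2:ℝ) ^ ((1:ℝ)/4)) 2, ← Real.rpow_mul (by norm_num),
      Real.sqrt_eq_rpow]
    norm_num
  have hw2 : w ^ 2 = w * w := sq w
  simp only [norm_div, norm_mul, Complex.norm_real, Real.norm_eq_abs,
    abs_of_pos (Real.rpow_pos_of_pos (by norm_num : (0:ℝ) < 2) _), div_pow, mul_pow, hq]
  rw [← add_div, div_sub_div_same, div_eq_one_iff_eq (pow_ne_zero 2 hd)]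
  have h' : z.re * z.re + z.im * z.im + (w.re * w.re + w.im * w.im) = 1 := by
    simpa [Complex.sq_norm, Complex.normSq_apply] using h
  rw [hw2]
  simp only [Complex.sq_norm, Complex.normSq_apply,
    Complex.add_re, Complex.add_im, Complex.sub_re, Complex.sub_im,
    Complex.mul_re, Complex.mul_im, Complex.I_re, Complex.I_im,
    Complex.one_re, Complex.one_im, Complex.ofReal_re, Complex.ofReal_im]
  linear_combination (-4 * Real.sqrt 2 * w.im) * h'
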